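/- (Theorem 1, deterministic form: duality-gap bound for PFFL with exponentiated-gradient dual updates.) Let W be a nonempty convex subset of ℝ^p, Z a positive integer, B > 0, ρ ≥ 0, η > 0, F : W → ℝ convex, and r_1, …, r_Z : W → ℝ convex with |r_j(w)| ≤ ρ for all w ∈ W and all j; let G(w, λ) = F(w) + ∑_{j=1}^Z λ_j r_j(w) for λ ∈ Λ_B. Let N be a positive integer, w^1, …, w^N ∈ W, and define the dual iterates by θ^1 = 0 ∈ ℝ^Z, θ^{t+1}_j = θ^t_j + η r_j(w^t), λ^t_j = B · exp(θ^t_j)/(1 + ∑_{j'} exp(θ^t_{j'})). Suppose there is A ≥ 0 such that (1/N) ∑_{t=1}^N G(w^t, λ^t) − (1/N) ∑_{t=1}^N G(w, λ^t) ≤ A for every w ∈ W (the primal player's average regret bound). Then, with w̄ = (1/N) ∑_t w^t and λ̄ = (1/N) ∑_t λ^t, for all w ∈ W and λ ∈ Λ_B: G(w̄, λ) − G(w, λ̄) ≤ A + B log(Z + 1)/(η N) + η ρ² B. -/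

import Mathlib

lemma aux_pos {u : ℝ} (hu1 : -1 ≤ u) {c : ℝ} (hc : 0 ≤ c) :
    0 < Real.cosh c + u * Real.sinh c := by
  have hs : 0 ≤ Real.sinh c := Real.sinh_nonneg_iff.2 hc
  have h := Real.cosh_sub_sinh c
  nlinarith [Real.exp_pos (-c)]

lemma sub1 {c : ℝ} (h0 : 0 ≤ c) (h1 : c ≤ 1) :
    (1 - c) ^ 2 * Real.sinh c ≤ 2 * c * Real.exp (-c) := by
  have hPE : Real.exp c * Real.exp (-c) = 1 := by
    rw [← Real.exp_add]; simp
  have he : (1 - c) * Real.exp c ≤ 1 := by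
    have h2 : 1 - c ≤ Real.exp (-c) := by
      have := Real.add_one_le_exp (-c); linarith
    calc (1 - c) * Real.exp c ≤ Real.exp (-c) * Real.exp c :=
          mul_le_mul_of_nonneg_right h2 (Real.exp_pos c).le
      _ = 1 := by rw [mul_comm]; exact hPE
  have hnn : 0 ≤ (1 - c) * Real.exp c := mul_nonneg (by linarith) (Real.exp_pos c).le
  have he2 : (1 - c) ^ 2 * (Real.exp c * Real.exp c) ≤ 1 := by
    nlinarith [he, hnn]
  rw [Real.sinh_eq]
  nlinarith [Real.exp_pos c, Real.exp_pos (-c)]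

lemma lemA {u : ℝ} (hu1 : -1 ≤ u) (hu2 : u ≤ 1) {c : ℝ} (hc : 0 ≤ c) :
    Real.cosh c + u * Real.sinh c ≤ Real.exp (u * c + c ^ 2) := by
  set f : ℝ → ℝ := fun c => u * c + c ^ 2 - Real.log (Real.cosh c + u * Real.sinh c) with hf
  have hderiv : ∀ x : ℝ, 0 ≤ x → HasDerivAt f
      (u + 2 * x - (Real.sinh x + u * Real.cosh x) / (Real.cosh x + u * Real.sinh x)) x := by
    intro x hx
    have h1 : HasDerivAt (fun y => Real.cosh y + u * Real.sinh y)
        (Real.sinh x + u * Real.cosh x) x :=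
      (Real.hasDerivAt_cosh x).add ((Real.hasDerivAt_sinh x).const_mul u)
    have h2 := h1.log (aux_pos hu1 hx).ne'
    have h3 : HasDerivAt (fun y : ℝ => u * y + y ^ 2) (u + 2 * x) x := by
      have := ((hasDerivAt_id x).const_mul u).add (hasDerivAt_pow 2 x)
      simp at this; exact this
    exact h3.sub h2
  have hderiv_nonneg : ∀ x : ℝ, 0 < x →
      0 ≤ u + 2 * x - (Real.sinh x + u * Real.cosh x) / (Real.cosh x + u * Real.sinh x) := by
    intro x hx
    have hpos := aux_pos hu1 hx.le
    rw [sub_nonneg, div_le_iff₀ hpos]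
    have hkey : (u + 2 * x) * (Real.cosh x + u * Real.sinh x) - (Real.sinh x + u * Real.cosh x)
        = Real.sinh x * ((u + x) ^ 2 - (1 - x) ^ 2) + 2 * x * Real.exp (-x) := by
      have h := Real.cosh_sub_sinh x
      nlinarith [h]
    have hs : 0 ≤ Real.sinh x := Real.sinh_nonneg_iff.2 hx.le
    rcases le_or_gt x 1 with hx1 | hx1
    · have := sub1 hx.le hx1
      nlinarith [sq_nonneg (u + x)]
    · have h1 : 0 ≤ (u + x) ^ 2 - (1 - x) ^ 2 := by nlinarith
      nlinarith [Real.exp_pos (-x)]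
  have hcont : ContinuousOn f (Set.Ici 0) := by
    apply ContinuousOn.sub
    · fun_prop
    · apply ContinuousOn.log
      · fun_prop
      · exact fun x hx => (aux_pos hu1 hx).ne'
  have hmono : MonotoneOn f (Set.Ici 0) := by
    apply monotoneOn_of_deriv_nonneg (convex_Ici 0) hcont
    · intro x hx
      rw [interior_Ici] at hx
      exact (hderiv x hx.le).differentiableAt.differentiableWithinAt
    · intro x hx
      rw [interior_Ici] at hx
      rw [(hderiv x hx.le).deriv]
      exact hderiv_nonneg x hx
  have h0 : f 0 = 0 := by simp [hf]
  have hfc : 0 ≤ f c := by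
    rw [← h0]
    exact hmono (Set.self_mem_Ici) hc hc
  have hpos := aux_pos hu1 hc
  have : Real.log (Real.cosh c + u * Real.sinh c) ≤ u * c + c ^ 2 := by
    simp only [hf] at hfc; linarith
  calc Real.cosh c + u * Real.sinh c = Real.exp (Real.log (Real.cosh c + u * Real.sinh c)) :=
        (Real.exp_log hpos).symm
    _ ≤ Real.exp (u * c + c ^ 2) := Real.exp_le_exp.2 this

lemma chord' {x c : ℝ} (hc : 0 < c) (hx : |x| ≤ c) :
    Real.exp x ≤ Real.cosh c + (x / c) * Real.sinh c := by
  obtain ⟨hx1, hx2⟩ := abs_le.1 hx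
  have ha : (0:ℝ) ≤ (c - x) / (2 * c) := div_nonneg (by linarith) (by linarith)
  have hb : (0:ℝ) ≤ (c + x) / (2 * c) := div_nonneg (by linarith) (by linarith)
  have hab : (c - x) / (2 * c) + (c + x) / (2 * c) = 1 := by
    field_simp; ring
  have h := convexOn_exp.2 (Set.mem_univ (-c)) (Set.mem_univ c) ha hb hab
  simp only [smul_eq_mul] at h
  have hxeq : (c - x) / (2 * c) * (-c) + (c + x) / (2 * c) * c = x := by
    field_simp; ring
  rw [hxeq] at h
  refine h.trans_eq ?_
  rw [Real.cosh_eq, Real.sinh_eq]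
  field_simp
  ring

lemma convexOn_finset_sum {E : Type*} [AddCommMonoid E] [Module ℝ E] {s : Set E}
    (hs : Convex ℝ s) {ι : Type*} (t : Finset ι) (f : ι → E → ℝ)
    (h : ∀ i ∈ t, ConvexOn ℝ s (f i)) :
    ConvexOn ℝ s (fun x => ∑ i ∈ t, f i x) := by
  classical
  induction t using Finset.induction_on with
  | empty => simpa using convexOn_const 0 hs
  | insert _ _ hni ih =>
    rename_i a u
    simp only [Finset.sum_insert hni]
    exact (h a (Finset.mem_insert_self a u)).add
      (ih fun i hi => h i (Finset.mem_insert_of_mem hi))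


lemma hedge_step {Z : ℕ} (g : Fin Z → ℝ) (θ : Fin Z → ℝ) {ρ η : ℝ} (hρ : 0 ≤ ρ) (hη : 0 < η)
    (hg : ∀ j, |g j| ≤ ρ) :
    1 + ∑ j, Real.exp (θ j + η * g j) ≤
      (1 + ∑ j, Real.exp (θ j)) *
        Real.exp (η * ((1 + ∑ j, Real.exp (θ j))⁻¹ * ∑ j, Real.exp (θ j) * g j) + (η * ρ) ^ 2) := by
  set S : ℝ := 1 + ∑ j, Real.exp (θ j) with hSdef
  have hsum_nonneg : (0:ℝ) ≤ ∑ j, Real.exp (θ j) :=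
    Finset.sum_nonneg fun j _ => (Real.exp_pos _).le
  have hS : 0 < S := by rw [hSdef]; linarith
  set Q : ℝ := ∑ j, Real.exp (θ j) * g j with hQdef
  rcases eq_or_lt_of_le hρ with hρ0 | hρ0
  · have hg0 : ∀ j, g j = 0 := fun j => abs_eq_zero.1 (le_antisymm (hρ0 ▸ hg j) (abs_nonneg _))
    have hQ0 : Q = 0 := by simp [hQdef, hg0]
    simp [hg0, hQ0, ← hρ0, ← hSdef]
  · set c : ℝ := η * ρ with hcdef
    have hc : 0 < c := mul_pos hη hρ0
    set u : ℝ := η * Q / (S * c) with hudef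
    have hQbound : |Q| ≤ ρ * ∑ j, Real.exp (θ j) := by
      calc |Q| ≤ ∑ j, |Real.exp (θ j) * g j| := Finset.abs_sum_le_sum_abs _ _
        _ ≤ ∑ j, Real.exp (θ j) * ρ := by
            refine Finset.sum_le_sum fun j _ => ?_
            rw [abs_mul, abs_of_pos (Real.exp_pos _)]
            exact mul_le_mul_of_nonneg_left (hg j) (Real.exp_pos _).le
        _ = ρ * ∑ j, Real.exp (θ j) := by rw [← Finset.sum_mul]; ring
    have hu_abs : |u| ≤ 1 := by
      rw [hudef, abs_div, abs_of_pos (mul_pos hS hc), div_le_one (mul_pos hS hc)]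
      rw [abs_mul, abs_of_pos hη]
      calc η * |Q| ≤ η * (ρ * ∑ j, Real.exp (θ j)) :=
            mul_le_mul_of_nonneg_left hQbound hη.le
        _ ≤ η * (ρ * S) := by
            refine mul_le_mul_of_nonneg_left (mul_le_mul_of_nonneg_left ?_ hρ) hη.le
            rw [hSdef]; linarith
        _ = S * c := by rw [hcdef]; ring
    obtain ⟨hu1, hu2⟩ := abs_le.1 hu_abs
    have hterm : ∀ j, Real.exp (θ j + η * g j) ≤
        Real.exp (θ j) * (Real.cosh c + (η * g j / c) * Real.sinh c) := by
      intro j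
      rw [Real.exp_add]
      refine mul_le_mul_of_nonneg_left (chord' hc ?_) (Real.exp_pos _).le
      rw [abs_mul, abs_of_pos hη, hcdef]
      exact mul_le_mul_of_nonneg_left (hg j) hη.le
    have h3 : ∑ j, Real.exp (θ j) * (Real.cosh c + (η * g j / c) * Real.sinh c)
        = (∑ j, Real.exp (θ j)) * Real.cosh c + (η * Q / c) * Real.sinh c := by
      have hj : ∀ j : Fin Z, Real.exp (θ j) * (Real.cosh c + (η * g j / c) * Real.sinh c)
          = Real.exp (θ j) * Real.cosh c + (η / c * Real.sinh c) * (Real.exp (θ j) * g j) := by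
        intro j; ring
      simp_rw [hj]
      rw [Finset.sum_add_distrib, ← Finset.sum_mul, ← Finset.mul_sum, ← hQdef]
      ring
    have hsum : 1 + ∑ j, Real.exp (θ j + η * g j) ≤ S * (Real.cosh c + u * Real.sinh c) := by
      have h2 : ∑ j, Real.exp (θ j + η * g j) ≤
          ∑ j, Real.exp (θ j) * (Real.cosh c + (η * g j / c) * Real.sinh c) :=
        Finset.sum_le_sum fun j _ => hterm j
      have hone : (1:ℝ) ≤ Real.cosh c := Real.one_le_cosh c
      have heq : S * (Real.cosh c + u * Real.sinh c)
          = S * Real.cosh c + (η * Q / c) * Real.sinh c := by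
        rw [hudef]; field_simp
      rw [heq, hSdef, add_mul, one_mul]
      rw [h3] at h2
      linarith
    have hfin := lemA hu1 hu2 hc.le
    have huc : u * c + c ^ 2 = η * (S⁻¹ * Q) + (η * ρ) ^ 2 := by
      rw [hudef, hcdef]; field_simp
    calc 1 + ∑ j, Real.exp (θ j + η * g j) ≤ S * (Real.cosh c + u * Real.sinh c) := hsum
      _ ≤ S * Real.exp (u * c + c ^ 2) := mul_le_mul_of_nonneg_left hfin hS.le
      _ = S * Real.exp (η * (S⁻¹ * Q) + (η * ρ) ^ 2) := by rw [huc]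


/-- Theorem 1 of the paper, deterministic form: duality-gap bound for PFFL
with exponentiated-gradient dual updates. If the primal iterates
`w^t ∈ W` (for `t = 0, …, N-1`) have average regret at most `A` against the
Hedge dual iterates `λ^t` (built from `θ 0 = 0`,
`θ^{t+1}_j = θ^t_j + η r_j(w^t)`, `λ^t_j = B exp(θ^t_j)/(1 + ∑_{j'} exp(θ^t_{j'}))`),
then the averaged iterates satisfy
`G(w̄, λ) − G(w, λ̄) ≤ A + B log(Z+1)/(η N) + η ρ² B` for all `w ∈ W`,
`λ ∈ Λ_B`. -/
theorem stmt_7 {p : ℕ} (W : Set (Fin p → ℝ)) (hW_ne : W.Nonempty)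
    (hW_cvx : Convex ℝ W) {Z : ℕ} (hZ : 0 < Z)
    {B ρ η : ℝ} (hB : 0 < B) (hρ : 0 ≤ ρ) (hη : 0 < η)
    (F : (Fin p → ℝ) → ℝ) (hF : ConvexOn ℝ W F)
    (r : (Fin p → ℝ) → Fin Z → ℝ) (hr : ∀ j, ConvexOn ℝ W (fun w => r w j))
    (hr_bdd : ∀ w ∈ W, ∀ j, |r w j| ≤ ρ)
    (G : (Fin p → ℝ) → (Fin Z → ℝ) → ℝ)
    (hG : ∀ w lam, G w lam = F w + ∑ j, lam j * r w j)
    {N : ℕ} (hN : 0 < N)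
    (w : ℕ → (Fin p → ℝ)) (hw : ∀ t < N, w t ∈ W)
    (θ : ℕ → Fin Z → ℝ)
    (hθ0 : ∀ j, θ 0 j = 0)
    (hθ : ∀ t j, θ (t + 1) j = θ t j + η * r (w t) j)
    (lam : ℕ → Fin Z → ℝ)
    (hlam : ∀ t j, lam t j =
      B * Real.exp (θ t j) / (1 + ∑ j', Real.exp (θ t j')))
    {A : ℝ} (hA : 0 ≤ A)
    (hregret_w : ∀ w' ∈ W,
      (N : ℝ)⁻¹ * ∑ t ∈ Finset.range N, G (w t) (lam t) -
        (N : ℝ)⁻¹ * ∑ t ∈ Finset.range N, G w' (lam t) ≤ A)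
    (wbar : Fin p → ℝ) (hwbar : wbar = (N : ℝ)⁻¹ • ∑ t ∈ Finset.range N, w t)
    (lambar : Fin Z → ℝ)
    (hlambar : lambar = (N : ℝ)⁻¹ • ∑ t ∈ Finset.range N, lam t) :
    ∀ w' ∈ W, ∀ lam' : Fin Z → ℝ, (∀ j, 0 ≤ lam' j) → (∑ j, lam' j ≤ B) →
      G wbar lam' - G w' lambar ≤
        A + B * Real.log (Z + 1) / (η * N) + η * ρ ^ 2 * B := by
  intro w' hw' lam' hl0 hlB
  have hNpos : (0:ℝ) < N := Nat.cast_pos.2 hN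
  have hNne : (N:ℝ) ≠ 0 := hNpos.ne'
  set c2 : ℝ := (η * ρ) ^ 2 with hc2def
  set S : ℕ → ℝ := fun t => 1 + ∑ j, Real.exp (θ t j) with hSdef
  have hS_pos : ∀ t, 0 < S t := by
    intro t
    have : (0:ℝ) ≤ ∑ j, Real.exp (θ t j) :=
      Finset.sum_nonneg fun j _ => (Real.exp_pos _).le
    simp only [hSdef]; linarith
  set m : ℕ → ℝ := fun t => η * ((S t)⁻¹ * ∑ j, Real.exp (θ t j) * r (w t) j) with hmdef
  -- one step of the potential bound
  have hstep : ∀ t < N, S (t + 1) ≤ S t * Real.exp (m t + c2) := by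
    intro t ht
    have hgb : ∀ j, |r (w t) j| ≤ ρ := hr_bdd _ (hw t ht)
    have h := hedge_step (r (w t)) (θ t) hρ hη hgb
    have hrw : S (t + 1) = 1 + ∑ j, Real.exp (θ t j + η * r (w t) j) := by
      simp only [hSdef]
      congr 1
      exact Finset.sum_congr rfl fun j _ => by rw [hθ t j]
    rw [hrw]
    exact h
  -- telescoping
  have hSN : S N ≤ S 0 * Real.exp (∑ t ∈ Finset.range N, (m t + c2)) := by
    have key : ∀ n, n ≤ N → S n ≤ S 0 * Real.exp (∑ t ∈ Finset.range n, (m t + c2)) := by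
      intro n
      induction n with
      | zero => intro _; simp
      | succ k ih =>
        intro hk
        have hkN : k < N := hk
        calc S (k + 1) ≤ S k * Real.exp (m k + c2) := hstep k hkN
          _ ≤ (S 0 * Real.exp (∑ t ∈ Finset.range k, (m t + c2))) * Real.exp (m k + c2) :=
              mul_le_mul_of_nonneg_right (ih hkN.le) (Real.exp_pos _).le
          _ = S 0 * Real.exp (∑ t ∈ Finset.range (k + 1), (m t + c2)) := by
              rw [Finset.sum_range_succ,
                Real.exp_add (∑ t ∈ Finset.range k, (m t + c2)) (m k + c2), ← mul_assoc]
    exact key N le_rfl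
  have hS0 : S 0 = (Z:ℝ) + 1 := by
    simp only [hSdef]
    simp [hθ0]
    ring
  set M : ℝ := ∑ t ∈ Finset.range N, m t with hMdef
  have hsum_mc : ∑ t ∈ Finset.range N, (m t + c2) = M + N * c2 := by
    rw [Finset.sum_add_distrib, Finset.sum_const, Finset.card_range, nsmul_eq_mul, hMdef]
  set R : ℝ := Real.log ((Z:ℝ) + 1) + (M + N * c2) with hRdef
  have hZ1 : (0:ℝ) < (Z:ℝ) + 1 := by positivity
  have hSNle : S N ≤ ((Z:ℝ) + 1) * Real.exp (M + N * c2) := by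
    rw [← hS0, ← hsum_mc]; exact hSN
  have hlogSN : Real.log (S N) ≤ R := by
    calc Real.log (S N) ≤ Real.log (((Z:ℝ) + 1) * Real.exp (M + N * c2)) :=
          Real.log_le_log (hS_pos N) hSNle
      _ = R := by
          rw [Real.log_mul hZ1.ne' (Real.exp_ne_zero _), Real.log_exp, hRdef]
  have hR0 : 0 ≤ R := by
    have h1 : (1:ℝ) ≤ S N := by
      have : (0:ℝ) ≤ ∑ j, Real.exp (θ N j) :=
        Finset.sum_nonneg fun j _ => (Real.exp_pos _).le
      simp only [hSdef]; linarith
    calc (0:ℝ) = Real.log 1 := Real.log_one.symm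
      _ ≤ Real.log (S N) := Real.log_le_log one_pos h1
      _ ≤ R := hlogSN
  have hθN : ∀ j, θ N j = η * ∑ t ∈ Finset.range N, r (w t) j := by
    intro j
    have key : ∀ n, θ n j = η * ∑ t ∈ Finset.range n, r (w t) j := by
      intro n
      induction n with
      | zero => simp [hθ0]
      | succ k ih => rw [hθ k j, ih, Finset.sum_range_succ]; ring
    exact key N
  have hRj : ∀ j, η * ∑ t ∈ Finset.range N, r (w t) j ≤ R := by
    intro j
    rw [← hθN j]
    have h1 : Real.exp (θ N j) ≤ S N := by
      have h2 := Finset.single_le_sum (f := fun j' => Real.exp (θ N j'))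
        (fun i _ => (Real.exp_pos _).le) (Finset.mem_univ j)
      simp only [hSdef]; linarith
    calc θ N j = Real.log (Real.exp (θ N j)) := (Real.log_exp _).symm
      _ ≤ Real.log (S N) := Real.log_le_log (Real.exp_pos _) h1
      _ ≤ R := hlogSN
  -- identify the dual payoffs
  have hT2 : ∀ t, ∑ j, lam t j * r (w t) j = (B / η) * m t := by
    intro t
    have hSne : S t ≠ 0 := (hS_pos t).ne'
    have hterm : ∀ j : Fin Z, lam t j * r (w t) j
        = B * (S t)⁻¹ * (Real.exp (θ t j) * r (w t) j) := by
      intro j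
      have : lam t j = B * Real.exp (θ t j) / S t := hlam t j
      rw [this]
      field_simp
    simp_rw [hterm]
    rw [← Finset.mul_sum, hmdef]
    field_simp
  -- dual regret bound
  have hdual : ∑ t ∈ Finset.range N, ∑ j, (lam' j - lam t j) * r (w t) j
      ≤ B * Real.log ((Z:ℝ) + 1) / η + N * (η * ρ ^ 2 * B) := by
    have hsplit : ∑ t ∈ Finset.range N, ∑ j, (lam' j - lam t j) * r (w t) j
        = (∑ j, lam' j * ∑ t ∈ Finset.range N, r (w t) j) - (B / η) * M := by
      simp_rw [sub_mul, Finset.sum_sub_distrib]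
      congr 1
      · rw [Finset.sum_comm]
        exact Finset.sum_congr rfl fun j _ => (Finset.mul_sum _ _ _).symm
      · simp_rw [hT2]
        rw [← Finset.mul_sum, hMdef]
    rw [hsplit]
    have h1 : ∑ j, lam' j * ∑ t ∈ Finset.range N, r (w t) j ≤ B * (R / η) := by
      have hj : ∀ j : Fin Z, lam' j * ∑ t ∈ Finset.range N, r (w t) j ≤ lam' j * (R / η) := by
        intro j
        refine mul_le_mul_of_nonneg_left ?_ (hl0 j)
        rw [le_div_iff₀ hη, mul_comm]
        exact hRj j
      calc ∑ j, lam' j * ∑ t ∈ Finset.range N, r (w t) j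
          ≤ ∑ j, lam' j * (R / η) := Finset.sum_le_sum fun j _ => hj j
        _ = (∑ j, lam' j) * (R / η) := by rw [← Finset.sum_mul]
        _ ≤ B * (R / η) := mul_le_mul_of_nonneg_right hlB (div_nonneg hR0 hη.le)
    have h2 : B * (R / η) - (B / η) * M
        = B * Real.log ((Z:ℝ) + 1) / η + N * (η * ρ ^ 2 * B) := by
      rw [hRdef, hc2def]
      field_simp
      ring
    linarith
  -- pointwise difference of G values
  have hGdiff : ∀ t, G (w t) lam' - G (w t) (lam t) = ∑ j, (lam' j - lam t j) * r (w t) j := by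
    intro t
    rw [hG, hG]
    simp_rw [sub_mul]
    rw [Finset.sum_sub_distrib]
    ring
  -- Jensen for the primal average
  have hjensen : G wbar lam' ≤ (N:ℝ)⁻¹ * ∑ t ∈ Finset.range N, G (w t) lam' := by
    have hconv : ConvexOn ℝ W (fun v => F v + ∑ j, lam' j * r v j) := by
      have h2 : ConvexOn ℝ W (fun v => ∑ j, lam' j * r v j) := by
        apply convexOn_finset_sum hW_cvx
        intro j _
        simpa [smul_eq_mul] using (hr j).smul (hl0 j)
      exact hF.add h2
    have hwt : ∀ t ∈ Finset.range N, w t ∈ W := fun t ht => hw t (Finset.mem_range.1 ht)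
    have hw0 : ∀ t ∈ Finset.range N, (0:ℝ) ≤ (N:ℝ)⁻¹ := fun t _ => by positivity
    have hone : ∑ _t ∈ Finset.range N, (N:ℝ)⁻¹ = 1 := by
      rw [Finset.sum_const, Finset.card_range, nsmul_eq_mul]
      field_simp
    have hjs := hconv.map_sum_le hw0 hone hwt
    have hwb : wbar = ∑ t ∈ Finset.range N, (N:ℝ)⁻¹ • w t := by
      rw [hwbar, Finset.smul_sum]
    rw [hG, hwb]
    calc F (∑ t ∈ Finset.range N, (N:ℝ)⁻¹ • w t)
          + ∑ j, lam' j * r (∑ t ∈ Finset.range N, (N:ℝ)⁻¹ • w t) j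
        ≤ ∑ t ∈ Finset.range N, (N:ℝ)⁻¹ • (F (w t) + ∑ j, lam' j * r (w t) j) := hjs
      _ = (N:ℝ)⁻¹ * ∑ t ∈ Finset.range N, G (w t) lam' := by
          rw [Finset.mul_sum]
          exact Finset.sum_congr rfl fun t _ => by rw [smul_eq_mul, hG]
  -- linearity in the dual variable
  have hlinear : G w' lambar = (N:ℝ)⁻¹ * ∑ t ∈ Finset.range N, G w' (lam t) := by
    have hlb : ∀ j, lambar j = (N:ℝ)⁻¹ * ∑ t ∈ Finset.range N, lam t j := by
      intro j
      rw [hlambar]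
      simp [Finset.sum_apply]
    have hsum : ∑ t ∈ Finset.range N, G w' (lam t)
        = N * F w' + ∑ j, (∑ t ∈ Finset.range N, lam t j) * r w' j := by
      simp_rw [hG]
      rw [Finset.sum_add_distrib, Finset.sum_const, Finset.card_range, nsmul_eq_mul,
        Finset.sum_comm]
      congr 1
      exact Finset.sum_congr rfl fun j _ => (Finset.sum_mul _ _ _).symm
    rw [hG, hsum, mul_add]
    congr 1
    · rw [← mul_assoc, inv_mul_cancel₀ hNne, one_mul]
    · rw [Finset.mul_sum]
      refine Finset.sum_congr rfl fun j _ => ?_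
      rw [hlb j]
      ring
  -- combine
  have hreg := hregret_w w' hw'
  have hmain : (N:ℝ)⁻¹ * ∑ t ∈ Finset.range N, G (w t) lam'
      - (N:ℝ)⁻¹ * ∑ t ∈ Finset.range N, G (w t) (lam t)
      ≤ B * Real.log ((Z:ℝ) + 1) / (η * N) + η * ρ ^ 2 * B := by
    have h1 : (N:ℝ)⁻¹ * ∑ t ∈ Finset.range N, G (w t) lam'
        - (N:ℝ)⁻¹ * ∑ t ∈ Finset.range N, G (w t) (lam t)
        = (N:ℝ)⁻¹ * ∑ t ∈ Finset.range N, ∑ j, (lam' j - lam t j) * r (w t) j := by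
      rw [← mul_sub, ← Finset.sum_sub_distrib]
      congr 1
      exact Finset.sum_congr rfl fun t _ => hGdiff t
    rw [h1]
    have h2 := mul_le_mul_of_nonneg_left hdual (by positivity : (0:ℝ) ≤ (N:ℝ)⁻¹)
    have h3 : (N:ℝ)⁻¹ * (B * Real.log ((Z:ℝ) + 1) / η + N * (η * ρ ^ 2 * B))
        = B * Real.log ((Z:ℝ) + 1) / (η * N) + η * ρ ^ 2 * B := by
      field_simp
    linarith
  calc G wbar lam' - G w' lambar
      ≤ ((N:ℝ)⁻¹ * ∑ t ∈ Finset.range N, G (w t) lam')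
        - (N:ℝ)⁻¹ * ∑ t ∈ Finset.range N, G w' (lam t) := by
        rw [hlinear]; linarith
    _ = ((N:ℝ)⁻¹ * ∑ t ∈ Finset.range N, G (w t) lam'
          - (N:ℝ)⁻¹ * ∑ t ∈ Finset.range N, G (w t) (lam t))
        + ((N:ℝ)⁻¹ * ∑ t ∈ Finset.range N, G (w t) (lam t)
          - (N:ℝ)⁻¹ * ∑ t ∈ Finset.range N, G w' (lam t)) := by ring
    _ ≤ (B * Real.log ((Z:ℝ) + 1) / (η * N) + η * ρ ^ 2 * B) + A :=
        add_le_add hmain hreg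
    _ = A + B * Real.log ((Z:ℝ) + 1) / (η * N) + η * ρ ^ 2 * B := by ring
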